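/- Assume the SpaceSaving guarantees with table size K on a stream of length N with sorted frequency function f, where K ≤ n. Then: (i) c_K ≤ N/K; (ii) f(i) ≤ c_K for every i with K < i ≤ n; (iii) for every i ≤ K, f(i) ≤ c_i ≤ f(i) + c_K, so in particular |f(i) − c_i| ≤ c_K. -/

import Mathlib

/-- under the SpaceSaving guarantees with table size `K ≤ n`:
(i) `c K ≤ N / K`; (ii) `f i ≤ c K` for every `K < i ≤ n`;
(iii) `f i ≤ c i ≤ f i + c K` for every `i ≤ K` (so `|f i - c i| ≤ c K`). -/
theorem stmt3
    (n K N : ℕ) (f c σ : ℕ → ℕ)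
    (hfmono : ∀ i ∈ Finset.Icc 1 n, ∀ j ∈ Finset.Icc 1 n, i ≤ j → f j ≤ f i)
    (hfsum : ∑ i ∈ Finset.Icc 1 n, f i = N)
    (hcmono : ∀ i ∈ Finset.Icc 1 K, ∀ j ∈ Finset.Icc 1 K, i ≤ j → c j ≤ c i)
    (hcsum : ∑ j ∈ Finset.Icc 1 K, c j = N)
    (hσmem : ∀ j ∈ Finset.Icc 1 K, σ j ∈ Finset.Icc 1 n)
    (hσinj : ∀ j ∈ Finset.Icc 1 K, ∀ j' ∈ Finset.Icc 1 K, σ j = σ j' → j = j')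
    (hlow : ∀ j ∈ Finset.Icc 1 K, c j ≤ f (σ j) + c K)
    (hup : ∀ j ∈ Finset.Icc 1 K, f (σ j) ≤ c j)
    (hout : ∀ i ∈ Finset.Icc 1 n, (∀ j ∈ Finset.Icc 1 K, σ j ≠ i) → f i ≤ c K)
    (hK1 : 1 ≤ K) (hKn : K ≤ n) :
    ((c K : ℝ) ≤ (N : ℝ) / K) ∧
    (∀ i : ℕ, K < i → i ≤ n → f i ≤ c K) ∧
    (∀ i : ℕ, 1 ≤ i → i ≤ K →
      f i ≤ c i ∧ c i ≤ f i + c K ∧ |(f i : ℝ) - (c i : ℝ)| ≤ (c K : ℝ)) := by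
  have hKcard : (Finset.Icc 1 K).card = K := by simp
  have hKmem : K ∈ Finset.Icc 1 K := Finset.mem_Icc.mpr ⟨hK1, le_refl K⟩
  have h1 : K * c K ≤ N := by
    calc K * c K = ∑ _j ∈ Finset.Icc 1 K, c K := by
          rw [Finset.sum_const, hKcard, smul_eq_mul]
      _ ≤ ∑ j ∈ Finset.Icc 1 K, c j := by
          apply Finset.sum_le_sum
          intro j hj
          exact hcmono j hj K hKmem (Finset.mem_Icc.mp hj).2
      _ = N := hcsum
  refine ⟨?_, ?_, ?_⟩
  · rw [le_div_iff₀ (by exact_mod_cast hK1 : (0:ℝ) < (K:ℝ))]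
    have : ((K * c K : ℕ) : ℝ) ≤ (N : ℝ) := by exact_mod_cast h1
    push_cast at this
    linarith
  · intro i hKi hin
    have hi1 : 1 ≤ i := le_trans hK1 (le_of_lt hKi)
    set T := (Finset.Icc 1 i).filter (fun m => m ∈ Finset.image σ (Finset.Icc 1 K)) with hT
    have hTsub : T ⊆ Finset.image σ (Finset.Icc 1 K) := by
      intro m hm
      exact (Finset.mem_filter.mp hm).2
    have hTcard : T.card ≤ K := by
      calc T.card ≤ (Finset.image σ (Finset.Icc 1 K)).card := Finset.card_le_card hTsub
        _ ≤ (Finset.Icc 1 K).card := Finset.card_image_le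
        _ = K := hKcard
    have hex : ∃ m ∈ Finset.Icc 1 i, m ∉ T := by
      by_contra h
      push_neg at h
      have hsub : Finset.Icc 1 i ⊆ T := fun m hm => h m hm
      have := Finset.card_le_card hsub
      simp only [Nat.card_Icc] at this
      omega
    rcases hex with ⟨m, hm, hmT⟩
    have hmP : ∀ j ∈ Finset.Icc 1 K, σ j ≠ m := by
      intro j hj hne
      exact hmT (Finset.mem_filter.mpr ⟨hm, Finset.mem_image.mpr ⟨j, hj, hne⟩⟩)
    have hmn : m ∈ Finset.Icc 1 n :=
      Finset.mem_Icc.mpr ⟨(Finset.mem_Icc.mp hm).1, (Finset.mem_Icc.mp hm).2.trans hin⟩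
    have h2 := hout m hmn hmP
    have h3 : f i ≤ f m :=
      hfmono m hmn i (Finset.mem_Icc.mpr ⟨hi1, hin⟩) (Finset.mem_Icc.mp hm).2
    omega
  · intro i h1i hiK
    have hiIcc : i ∈ Finset.Icc 1 K := Finset.mem_Icc.mpr ⟨h1i, hiK⟩
    have hin : i ∈ Finset.Icc 1 n := Finset.mem_Icc.mpr ⟨h1i, hiK.trans hKn⟩
    have hcK : c K ≤ c i := hcmono i hiIcc K hKmem hiK
    have hfi : f i ≤ c i := by
      by_contra hcon
      push_neg at hcon
      set B := (Finset.Icc 1 K).filter (fun j => σ j ∈ Finset.Icc 1 i) with hB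
      have hcover : Finset.Icc 1 i ⊆ Finset.image σ B := by
        intro m hm
        rcases Finset.mem_Icc.mp hm with ⟨h1m, hmi⟩
        have hmn' : m ∈ Finset.Icc 1 n :=
          Finset.mem_Icc.mpr ⟨h1m, hmi.trans (hiK.trans hKn)⟩
        have hfm : f i ≤ f m := hfmono m hmn' i hin hmi
        have hnle : ¬ (f m ≤ c K) := by omega
        have hex : ¬ ∀ j ∈ Finset.Icc 1 K, σ j ≠ m := fun h => hnle (hout m hmn' h)
        push_neg at hex
        rcases hex with ⟨j, hj, hjm⟩
        exact Finset.mem_image.mpr ⟨j, Finset.mem_filter.mpr ⟨hj, hjm ▸ hm⟩, hjm⟩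
      have hBsub : B ⊆ Finset.Icc 1 (i - 1) := by
        intro j hj
        rcases Finset.mem_filter.mp hj with ⟨hjK, hσj⟩
        have ha : f (σ j) ≤ c j := hup j hjK
        have hb : f i ≤ f (σ j) :=
          hfmono (σ j) (hσmem j hjK) i hin (Finset.mem_Icc.mp hσj).2
        have hji : j < i := by
          by_contra hji
          push_neg at hji
          have := hcmono i hiIcc j hjK hji
          omega
        exact Finset.mem_Icc.mpr ⟨(Finset.mem_Icc.mp hjK).1, by omega⟩
      have hc1 : i ≤ (Finset.image σ B).card := by
        calc i = (Finset.Icc 1 i).card := by simp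
          _ ≤ _ := Finset.card_le_card hcover
      have hc2 : (Finset.image σ B).card ≤ B.card := Finset.card_image_le
      have hc3 : B.card ≤ i - 1 := by
        calc B.card ≤ (Finset.Icc 1 (i - 1)).card := Finset.card_le_card hBsub
          _ = i - 1 := by simp
      omega
    have hub : c i ≤ f i + c K := by
      have hsubK : ∀ j ∈ Finset.Icc 1 i, j ∈ Finset.Icc 1 K := by
        intro j hj
        exact Finset.mem_Icc.mpr ⟨(Finset.mem_Icc.mp hj).1, (Finset.mem_Icc.mp hj).2.trans hiK⟩
      have hex : ∃ j ∈ Finset.Icc 1 i, i ≤ σ j := by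
        by_contra h
        push_neg at h
        have hmap : ∀ j ∈ Finset.Icc 1 i, σ j ∈ Finset.Icc 1 (i - 1) := by
          intro j hj
          have h1σ : 1 ≤ σ j := (Finset.mem_Icc.mp (hσmem j (hsubK j hj))).1
          have h2σ := h j hj
          exact Finset.mem_Icc.mpr ⟨h1σ, by omega⟩
        have hinj : Set.InjOn σ (Finset.Icc 1 i) := by
          intro a ha b hb hab
          exact hσinj a (hsubK a (Finset.mem_coe.mp ha)) b (hsubK b (Finset.mem_coe.mp hb)) hab
        have := Finset.card_le_card_of_injOn σ hmap hinj
        simp only [Nat.card_Icc] at this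
        omega
      rcases hex with ⟨j, hj, hij⟩
      have hjK : j ∈ Finset.Icc 1 K := hsubK j hj
      have h1c : c i ≤ c j := hcmono j hjK i hiIcc (Finset.mem_Icc.mp hj).2
      have h2c := hlow j hjK
      have h3c : f (σ j) ≤ f i := hfmono i hin (σ j) (hσmem j hjK) hij
      omega
    refine ⟨hfi, hub, ?_⟩
    rw [abs_le]
    have a1 : (f i : ℝ) ≤ (c i : ℝ) := by exact_mod_cast hfi
    have a2 : (c i : ℝ) ≤ (f i : ℝ) + (c K : ℝ) := by exact_mod_cast hub
    have a3 : (0:ℝ) ≤ (c K : ℝ) := by positivity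
    constructor <;> linarith
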